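/- In the polynomial ring R = ℚ[a,b,c], let I = (ac², b²(a+c), ab(a+c), bc(a+c)). Then the saturation of I with respect to the irrelevant ideal (a,b,c) is the complete intersection ideal (ac², b(a+c)): I : (a,b,c)^∞ = (ac², b(a+c)). -/

import Mathlib

open MvPolynomial

/-- The saturation `I : q^∞ = ⋃_{j ≥ 0} (I : q^j)` of an ideal `I` with respect to an
ideal `q`. -/
noncomputable def idealSat {A : Type*} [CommRing A] (I q : Ideal A) : Ideal A :=
  ⨆ j : ℕ, Submodule.colon I ((q ^ j : Ideal A) : Set A)

local notation "a" => (MvPolynomial.X 0 : MvPolynomial (Fin 3) ℚ)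
local notation "b" => (MvPolynomial.X 1 : MvPolynomial (Fin 3) ℚ)
local notation "c" => (MvPolynomial.X 2 : MvPolynomial (Fin 3) ℚ)

abbrev R3 := MvPolynomial (Fin 3) ℚ

noncomputable def B (i : Fin 3) : R3 →ₐ[ℚ] R3 :=
  aeval (fun j => if j = i then 0 else X j)

lemma B_X_self (i : Fin 3) : B i (X i) = 0 := by simp [B]

lemma B_X_ne {i j : Fin 3} (h : j ≠ i) : B i (X j) = X j := by simp [B, h]

lemma B_decomp (i : Fin 3) (p : R3) : ∃ r, p = B i p + X i * r := by
  induction p using MvPolynomial.induction_on with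
  | C q => exact ⟨0, by simp [B]⟩
  | add p q hp hq =>
    obtain ⟨r, hr⟩ := hp; obtain ⟨s, hs⟩ := hq
    refine ⟨r + s, ?_⟩
    rw [map_add]
    conv_lhs => rw [hr, hs]
    ring
  | mul_X p j hp =>
    obtain ⟨r, hr⟩ := hp
    by_cases h : j = i
    · subst h
      exact ⟨p, by rw [map_mul, B_X_self, mul_zero, zero_add, mul_comm]⟩
    · refine ⟨r * X j, ?_⟩
      rw [map_mul, B_X_ne h]
      conv_lhs => rw [hr]
      ring

noncomputable def chi : R3 →ₐ[ℚ] R3 :=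
  aeval (fun j => if j = 2 then X 2 - X 0 else X j)

noncomputable def psi : R3 →ₐ[ℚ] R3 :=
  aeval (fun j => if j = 2 then X 2 + X 0 else X j)

@[simp] lemma chi_X0 : chi (X 0) = (X 0 : R3) := by simp [chi]
@[simp] lemma chi_X1 : chi (X 1) = (X 1 : R3) := by simp [chi]
@[simp] lemma chi_X2 : chi (X 2) = (X 2 - X 0 : R3) := by simp [chi]
@[simp] lemma psi_X0 : psi (X 0) = (X 0 : R3) := by simp [psi]
@[simp] lemma psi_X1 : psi (X 1) = (X 1 : R3) := by simp [psi]
@[simp] lemma psi_X2 : psi (X 2) = (X 2 + X 0 : R3) := by simp [psi]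
@[simp] lemma B1_X0 : B 1 (X 0) = (X 0 : R3) := B_X_ne (by decide)
@[simp] lemma B1_X1 : B 1 (X 1) = (0 : R3) := B_X_self 1
@[simp] lemma B1_X2 : B 1 (X 2) = (X 2 : R3) := B_X_ne (by decide)
@[simp] lemma B2_X0 : B 2 (X 0) = (X 0 : R3) := B_X_ne (by decide)
@[simp] lemma B2_X1 : B 2 (X 1) = (X 1 : R3) := B_X_ne (by decide)
@[simp] lemma B2_X2 : B 2 (X 2) = (0 : R3) := B_X_self 2

lemma X_add_X_ne : (a + c : R3) ≠ 0 := by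
  intro h
  have := congrArg (eval (fun _ => (1 : ℚ))) h
  simp at this

lemma shift_mem {S : Set (Fin 3 →₀ ℕ)} {f : R3} (k : Fin 3) (hS : ∀ s ∈ S, s k = 0)
    (h : f * X k ∈ Ideal.span ((fun s => monomial s (1 : ℚ)) '' S)) :
    f ∈ Ideal.span ((fun s => monomial s (1 : ℚ)) '' S) := by
  rw [mem_ideal_span_monomial_image] at h ⊢
  intro m hm
  obtain ⟨si, hsi, hle⟩ := h (m + Finsupp.single k 1)
    (by rw [support_mul_X]; exact Finset.mem_map_of_mem _ hm)
  refine ⟨si, hsi, fun j => ?_⟩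
  by_cases hj : j = k
  · subst hj; simp [hS si hsi]
  · have := hle j
    simpa [Finsupp.single_apply, hj, Ne.symm hj] using this

lemma span_ab : (Ideal.span {a, b} : Ideal R3) =
    Ideal.span ((fun s => monomial s (1 : ℚ)) '' {Finsupp.single 0 1, Finsupp.single 1 1}) := by
  rw [Set.image_insert_eq, Set.image_singleton]
  simp [X]

lemma span_bc2 : (Ideal.span {b, c ^ 2} : Ideal R3) =
    Ideal.span ((fun s => monomial s (1 : ℚ)) '' {Finsupp.single 1 1, Finsupp.single 2 2}) := by
  rw [Set.image_insert_eq, Set.image_singleton]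
  rw [X_pow_eq_monomial]
  simp [X]

lemma span_bac2 : (Ideal.span {b, a * c ^ 2} : Ideal R3) =
    Ideal.span ((fun s => monomial s (1 : ℚ)) ''
      {Finsupp.single 1 1, Finsupp.single 0 1 + Finsupp.single 2 2}) := by
  rw [Set.image_insert_eq, Set.image_singleton]
  have : monomial (Finsupp.single 0 1 + Finsupp.single 2 2) (1 : ℚ) = a * c ^ 2 := by
    rw [X_pow_eq_monomial, X, monomial_mul, one_mul]
  simp [this, X]

lemma span_ca3 : (Ideal.span {c, a ^ 3} : Ideal R3) =
    Ideal.span ((fun s => monomial s (1 : ℚ)) '' {Finsupp.single 2 1, Finsupp.single 0 3}) := by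
  rw [Set.image_insert_eq, Set.image_singleton]
  rw [X_pow_eq_monomial]
  simp [X]

-- inclusions of J into the three components
lemma J_le_ab : Ideal.span {a * c ^ 2, b * (a + c)} ≤ (Ideal.span {a, b} : Ideal R3) := by
  rw [Ideal.span_le]
  rintro x (rfl | rfl)
  · exact Ideal.mem_span_pair.2 ⟨c ^ 2, 0, by ring⟩
  · exact Ideal.mem_span_pair.2 ⟨0, a + c, by ring⟩

lemma J_le_bc2 : Ideal.span {a * c ^ 2, b * (a + c)} ≤ (Ideal.span {b, c ^ 2} : Ideal R3) := by
  rw [Ideal.span_le]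
  rintro x (rfl | rfl)
  · exact Ideal.mem_span_pair.2 ⟨0, a, by ring⟩
  · exact Ideal.mem_span_pair.2 ⟨a + c, 0, by ring⟩

lemma ac2_mem_Q3 : a * c ^ 2 ∈ (Ideal.span {a + c, a ^ 3} : Ideal R3) :=
  Ideal.mem_span_pair.2 ⟨a * c - a ^ 2, 1, by ring⟩

lemma J_le_Q3 : Ideal.span {a * c ^ 2, b * (a + c)} ≤ (Ideal.span {a + c, a ^ 3} : Ideal R3) := by
  rw [Ideal.span_le]
  rintro x (rfl | rfl)
  · exact ac2_mem_Q3
  · exact Ideal.mem_span_pair.2 ⟨b, 0, by ring⟩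

lemma crux {f : R3} (hJa : f * a ∈ Ideal.span {a * c ^ 2, b * (a + c)})
    (hJb : f * b ∈ Ideal.span {a * c ^ 2, b * (a + c)})
    (hJc : f * c ∈ Ideal.span {a * c ^ 2, b * (a + c)}) :
    f ∈ Ideal.span {a * c ^ 2, b * (a + c)} := by
  -- Step 1 : f ∈ (a, b)
  have h1 : f ∈ (Ideal.span {a, b} : Ideal R3) := by
    rw [span_ab]
    refine shift_mem 2 ?_ ?_
    · rintro s (rfl | rfl) <;> simp [Finsupp.single_apply]
    · rw [← span_ab]; exact J_le_ab hJc
  -- Step 2 : f ∈ (b, c²)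
  have h2 : f ∈ (Ideal.span {b, c ^ 2} : Ideal R3) := by
    rw [span_bc2]
    refine shift_mem 0 ?_ ?_
    · rintro s (rfl | rfl) <;> simp [Finsupp.single_apply]
    · rw [← span_bc2]; exact J_le_bc2 hJa
  -- Step 3 : f ∈ (b, ac²)
  have h3 : f ∈ (Ideal.span {b, a * c ^ 2} : Ideal R3) := by
    rw [span_bac2, mem_ideal_span_monomial_image]
    rw [span_ab, mem_ideal_span_monomial_image] at h1
    rw [span_bc2, mem_ideal_span_monomial_image] at h2
    intro m hm
    obtain ⟨si, hsi, hsle⟩ := h1 m hm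
    obtain ⟨ti, hti, htle⟩ := h2 m hm
    rcases hti with rfl | rfl
    · exact ⟨Finsupp.single 1 1, Or.inl rfl, htle⟩
    rcases hsi with rfl | rfl
    · refine ⟨Finsupp.single 0 1 + Finsupp.single 2 2, Or.inr rfl, fun j => ?_⟩
      have h1j := hsle j
      have h2j := htle j
      fin_cases j <;> simp_all [Finsupp.single_apply]
    · exact ⟨Finsupp.single 1 1, Or.inl rfl, hsle⟩
  -- Step 4 : f ∈ Q₃ = (a+c, a³)
  have h4 : f ∈ (Ideal.span {a + c, a ^ 3} : Ideal R3) := by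
    obtain ⟨p, q, hpq⟩ := Ideal.mem_span_pair.1 (J_le_Q3 hJb)
    -- apply chi
    have hchi : chi p * c + chi q * a ^ 3 + chi f * (-(a ^ 3)) * 0 = chi f * b := by
      have := congrArg chi hpq
      simp only [map_add, map_mul, map_pow, map_sub, chi_X0, chi_X1, chi_X2] at this
      linear_combination this
    have hc3 : chi f * b ∈ (Ideal.span {c, a ^ 3} : Ideal R3) :=
      Ideal.mem_span_pair.2 ⟨chi p, chi q, by linear_combination hchi⟩
    have hc4 : chi f ∈ (Ideal.span {c, a ^ 3} : Ideal R3) := by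
      rw [span_ca3]
      refine shift_mem 1 ?_ ?_
      · rintro s (rfl | rfl) <;> simp [Finsupp.single_apply]
      · rw [← span_ca3]; exact hc3
    obtain ⟨p', q', hpq'⟩ := Ideal.mem_span_pair.1 hc4
    have := congrArg psi hpq'
    simp only [map_add, map_mul, map_pow, psi_X0, psi_X2] at this
    have hpsichi : psi (chi f) = f := by
      have h : psi.comp chi = AlgHom.id ℚ R3 := by
        apply algHom_ext
        intro j
        fin_cases j <;> simp
      exact DFunLike.congr_fun h f
    rw [hpsichi] at this
    exact Ideal.mem_span_pair.2 ⟨psi p', psi q', by linear_combination this⟩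
  -- Step 5 : combine
  obtain ⟨g, h, hf⟩ := Ideal.mem_span_pair.1 h3
  have hgbQ3 : g * b ∈ (Ideal.span {a + c, a ^ 3} : Ideal R3) := by
    have : g * b = f - h * (a * c ^ 2) := by linear_combination hf
    rw [this]
    exact sub_mem h4 (Ideal.mul_mem_left _ h ac2_mem_Q3)
  obtain ⟨u, v, huv⟩ := Ideal.mem_span_pair.1 hgbQ3
  -- apply B 1 (set b = 0)
  have heq : B 1 u * (a + c) + B 1 v * a ^ 3 = 0 := by
    have := congrArg (B 1) huv
    simp only [map_add, map_mul, map_pow, B1_X0, B1_X1, B1_X2, mul_zero] at this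
    linear_combination this
  -- apply chi then B 2 to conclude B 2 (chi (B 1 v)) = 0
  have hchieq : chi (B 1 u) * c + chi (B 1 v) * a ^ 3 = 0 := by
    have := congrArg chi heq
    simp only [map_add, map_mul, map_pow, map_sub, map_zero, chi_X0, chi_X2] at this
    linear_combination this
  have hB2 : a ^ 3 * B 2 (chi (B 1 v)) = 0 := by
    have := congrArg (B 2) hchieq
    simp only [map_add, map_mul, map_pow, map_zero, B2_X0, B2_X2, mul_zero] at this
    linear_combination this
  have hB2v : B 2 (chi (B 1 v)) = 0 := by
    rcases mul_eq_zero.1 hB2 with h' | h'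
    · exact absurd h' (pow_ne_zero _ (X_ne_zero 0))
    · exact h'
  obtain ⟨Q₁, hQ1⟩ := B_decomp 2 (chi (B 1 v))
  rw [hB2v, zero_add] at hQ1
  -- B 1 v = (a + c) * psi Q₁
  have hpsichi : ∀ x : R3, psi (chi x) = x := by
    intro x
    have h : psi.comp chi = AlgHom.id ℚ R3 := by
      apply algHom_ext
      intro j
      fin_cases j <;> simp
    exact DFunLike.congr_fun h x
  have hv : B 1 v = (X 2 + X 0) * psi Q₁ := by
    have := congrArg psi hQ1
    simp only [map_mul, psi_X2] at this
    rw [hpsichi] at this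
    exact this
  set w := psi Q₁ with hw
  have hBu : B 1 u = -(a ^ 3 * w) := by
    have h0 : (a + c) * B 1 u = (a + c) * (-(a ^ 3 * w)) := by
      linear_combination heq - a ^ 3 * hv
    exact mul_left_cancel₀ X_add_X_ne h0
  obtain ⟨u₁, hu1⟩ := B_decomp 1 u
  obtain ⟨v₁, hv1⟩ := B_decomp 1 v
  have hgb2 : g * b = (u₁ * (a + c) + v₁ * a ^ 3) * b := by
    have step : g * b = (B 1 u + X 1 * u₁) * (a + c) + (B 1 v + X 1 * v₁) * a ^ 3 := by
      rw [← hu1, ← hv1]; exact huv.symm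
    rw [hBu, hv] at step
    linear_combination step
  have hg : g = u₁ * (a + c) + v₁ * a ^ 3 := mul_right_cancel₀ (X_ne_zero 1) hgb2
  exact Ideal.mem_span_pair.2 ⟨v₁ * b + h, u₁ + v₁ * (a ^ 2 - a * c),
    by linear_combination hf - b * hg⟩

lemma mul_span3 {K : Ideal R3} {r : R3} (h1 : r * a ∈ K) (h2 : r * b ∈ K) (h3 : r * c ∈ K) :
    ∀ p ∈ Ideal.span {a, b, c}, r * p ∈ K := by
  intro p hp
  induction hp using Submodule.span_induction with
  | mem x hx =>
    rcases hx with rfl | rfl | rfl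
    · exact h1
    · exact h2
    · exact h3
  | zero => simpa using K.zero_mem
  | add x y _ _ hx hy => rw [mul_add]; exact K.add_mem hx hy
  | smul t x _ hx =>
    rw [smul_eq_mul, ← mul_assoc, mul_comm r t, mul_assoc]
    exact K.mul_mem_left t hx

lemma I_le_J : Ideal.span {a * c ^ 2, b ^ 2 * (a + c), a * b * (a + c), b * c * (a + c)} ≤
    Ideal.span {a * c ^ 2, b * (a + c)} := by
  rw [Ideal.span_le]
  rintro x (rfl | rfl | rfl | rfl)
  · exact Ideal.mem_span_pair.2 ⟨1, 0, by ring⟩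
  · exact Ideal.mem_span_pair.2 ⟨0, b, by ring⟩
  · exact Ideal.mem_span_pair.2 ⟨0, a, by ring⟩
  · exact Ideal.mem_span_pair.2 ⟨0, c, by ring⟩

lemma Xk_mem_m (k : Fin 3) : X k ∈ (Ideal.span {a, b, c} : Ideal R3) := by
  apply Ideal.subset_span
  fin_cases k <;> simp

lemma colon_le_J (j : ℕ) :
    Submodule.colon
        (Ideal.span {a * c ^ 2, b ^ 2 * (a + c), a * b * (a + c), b * c * (a + c)})
        (((Ideal.span {a, b, c} : Ideal R3) ^ j : Ideal R3) : Set R3) ≤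
      Ideal.span {a * c ^ 2, b * (a + c)} := by
  induction j with
  | zero =>
    intro r hr
    have h1 : (1 : R3) ∈ (Ideal.span {a, b, c} : Ideal R3) ^ 0 := by
      rw [pow_zero, Ideal.one_eq_top]; trivial
    have := Submodule.mem_colon.1 hr 1 h1
    rw [smul_eq_mul, mul_one] at this
    exact I_le_J this
  | succ j ih =>
    intro r hr
    have key : ∀ k : Fin 3, r * X k ∈ Submodule.colon
        (Ideal.span {a * c ^ 2, b ^ 2 * (a + c), a * b * (a + c), b * c * (a + c)})
        (((Ideal.span {a, b, c} : Ideal R3) ^ j : Ideal R3) : Set R3) := by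
      intro k
      rw [Submodule.mem_colon]
      intro p hp
      have hmem : p * X k ∈ (Ideal.span {a, b, c} : Ideal R3) ^ (j + 1) := by
        rw [pow_succ]
        exact Ideal.mul_mem_mul hp (Xk_mem_m k)
      have h' := Submodule.mem_colon.1 hr (p * X k) hmem
      rw [smul_eq_mul] at h' ⊢
      have e : r * X k * p = r * (p * X k) := by ring
      rw [e]
      exact h'
    exact crux (ih (key 0)) (ih (key 1)) (ih (key 2))

/-- In `R = ℚ[a,b,c]`, the saturation of `I = (ac², b²(a+c), ab(a+c), bc(a+c))` with
respect to the irrelevant ideal `(a,b,c)` is the complete intersection ideal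
`(ac², b(a+c))`. -/
theorem saturation_of_example_ideal :
    idealSat
        (Ideal.span {a * c ^ 2, b ^ 2 * (a + c), a * b * (a + c), b * c * (a + c)})
        (Ideal.span {a, b, c}) =
      Ideal.span {a * c ^ 2, b * (a + c)} := by
  rw [idealSat]
  apply le_antisymm
  · exact iSup_le colon_le_J
  · rw [Ideal.span_le]
    have main : ∀ g : R3,
        g * a ∈ Ideal.span {a * c ^ 2, b ^ 2 * (a + c), a * b * (a + c), b * c * (a + c)} →
        g * b ∈ Ideal.span {a * c ^ 2, b ^ 2 * (a + c), a * b * (a + c), b * c * (a + c)} →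
        g * c ∈ Ideal.span {a * c ^ 2, b ^ 2 * (a + c), a * b * (a + c), b * c * (a + c)} →
        g ∈ ⨆ j : ℕ, Submodule.colon
          (Ideal.span {a * c ^ 2, b ^ 2 * (a + c), a * b * (a + c), b * c * (a + c)})
          (((Ideal.span {a, b, c} : Ideal R3) ^ j : Ideal R3) : Set R3) := by
      intro g h1 h2 h3
      apply Submodule.mem_iSup_of_mem 1
      rw [Submodule.mem_colon]
      intro p hp
      rw [pow_one] at hp
      rw [smul_eq_mul]
      exact mul_span3 h1 h2 h3 p hp
    rintro x (rfl | rfl)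
    · refine main _ ?_ ?_ ?_ <;>
        exact Ideal.mul_mem_right _ _ (Ideal.subset_span (by simp))
    · refine main _ ?_ ?_ ?_
      · have e : b * (a + c) * a = a * b * (a + c) := by ring
        rw [e]; exact Ideal.subset_span (by simp)
      · have e : b * (a + c) * b = b ^ 2 * (a + c) := by ring
        rw [e]; exact Ideal.subset_span (by simp)
      · have e : b * (a + c) * c = b * c * (a + c) := by ring
        rw [e]; exact Ideal.subset_span (by simp)
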